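/- Let {e^{tL}}_{t≥0} be a quantum dynamical semigroup of unital channels on M_d and let P := span{X ∈ M_d : L(X) = iaX for some a ∈ ℝ}. Then M_d = P ⊕ N as a direct sum of vector spaces, where N := {Y ∈ M_d : e^{tL}(Y) → 0 as t → ∞}. -/

import Mathlib

noncomputable section
open scoped Kronecker
open Filter Topology Matrix

/-- `M_d`, the algebra of `d × d` complex matrices. -/
abbrev Md (d : ℕ) := Matrix (Fin d) (Fin d) ℂ

/-- `Ad_U : X ↦ U* X U` for a unitary `U`. -/
def adU {d : ℕ} (U : Matrix.unitaryGroup (Fin d) ℂ) : Md d →ₗ[ℂ] Md d where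
  toFun X := (U : Md d)ᴴ * X * (U : Md d)
  map_add' X Y := by simp [Matrix.mul_add, Matrix.add_mul]
  map_smul' c X := by simp [Matrix.mul_smul, Matrix.smul_mul]

/-- A linear map is completely positive if it has a Kraus decomposition. -/
def IsCP {d : ℕ} (Φ : Md d →ₗ[ℂ] Md d) : Prop :=
  ∃ (n : ℕ) (V : Fin n → Md d), ∀ X, Φ X = ∑ j, (V j)ᴴ * X * (V j)

def IsUnital {d : ℕ} (Φ : Md d →ₗ[ℂ] Md d) : Prop := Φ 1 = 1

def IsTracePreserving {d : ℕ} (Φ : Md d →ₗ[ℂ] Md d) : Prop :=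
  ∀ X, (Φ X).trace = X.trace

def IsHermitianPreserving {d : ℕ} (Φ : Md d →ₗ[ℂ] Md d) : Prop :=
  ∀ X, Φ Xᴴ = (Φ X)ᴴ

/-- A unital quantum channel: CP, unital and trace-preserving. -/
def IsUnitalChannel {d : ℕ} (Φ : Md d →ₗ[ℂ] Md d) : Prop :=
  IsCP Φ ∧ IsUnital Φ ∧ IsTracePreserving Φ

/-- A mixed unitary channel: a convex combination of unitary conjugations. -/
def IsMixedUnitary {d : ℕ} (Φ : Md d →ₗ[ℂ] Md d) : Prop :=
  ∃ (ℓ : ℕ) (U : Fin ℓ → Matrix.unitaryGroup (Fin d) ℂ) (lam : Fin ℓ → ℝ),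
    (∀ j, 0 ≤ lam j) ∧ (∀ j, lam j ≤ 1) ∧ (∑ j, lam j = 1) ∧
    Φ = ∑ j, (lam j : ℂ) • adU (U j)

/-- The Choi matrix `J(Φ) = (1/d) ∑_{i,j} E_{ij} ⊗ Φ(E_{ij})`. -/
def choi {d : ℕ} (Φ : Md d →ₗ[ℂ] Md d) : Matrix (Fin d × Fin d) (Fin d × Fin d) ℂ :=
  (d : ℂ)⁻¹ • ∑ i : Fin d, ∑ j : Fin d,
    (Matrix.single i j (1 : ℂ)) ⊗ₖ Φ (Matrix.single i j (1 : ℂ))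

/-- `⟨Φ, Ψ⟩ = tr(J(Φ)* J(Ψ))`; this is a real number whenever `Φ, Ψ` are
Hermitian-preserving, so we record its real part. -/
def pairRe {d : ℕ} (Φ Ψ : Md d →ₗ[ℂ] Md d) : ℝ := (((choi Φ)ᴴ * choi Ψ).trace).re

/-- The Hilbert–Schmidt (Choi) norm `‖Φ‖₂ = tr(J(Φ)* J(Φ))^{1/2}`. -/
def hsNorm {d : ℕ} (Φ : Md d →ₗ[ℂ] Md d) : ℝ := Real.sqrt (pairRe Φ Φ)

attribute [local instance] Matrix.normedAddCommGroup Matrix.normedSpace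

/-- The exponential `e^{tL}` of a linear map `L` on `M_d`. -/
def expL {d : ℕ} (L : Md d →ₗ[ℂ] Md d) (t : ℝ) : Md d →ₗ[ℂ] Md d :=
  letI : IsTopologicalRing (Md d →L[ℂ] Md d) :=
    @NonUnitalSeminormedRing.toIsTopologicalRing _ (@SeminormedRing.toNonUnitalSeminormedRing _
      (@NormedRing.toSeminormedRing _ (ContinuousLinearMap.toNormedRing (𝕜 := ℂ) (E := Md d))))
  ((NormedSpace.exp ((t : ℂ) • (LinearMap.toContinuousLinearMap L)) :
      Md d →L[ℂ] Md d)).toLinearMap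

/-- `P = span{X : L X = i a X for some real a}`. -/
def periphGen {d : ℕ} (L : Md d →ₗ[ℂ] Md d) : Submodule ℂ (Md d) :=
  Submodule.span ℂ {X : Md d | ∃ a : ℝ, L X = ((a : ℂ) * Complex.I) • X}

/-- `N = {Y : e^{tL} Y → 0 as t → ∞}`. -/
def decaySet {d : ℕ} (L : Md d →ₗ[ℂ] Md d) : Set (Md d) :=
  {Y : Md d | Filter.Tendsto (fun t : ℝ => expL L t Y) atTop (nhds 0)}

section Helpers
variable {d : ℕ}

lemma pow_smul_apply {B : Md d →ₗ[ℂ] Md d} (c : ℂ) (Bc : Md d →L[ℂ] Md d)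
    (hB : ∀ z, Bc z = B z) : ∀ (n : ℕ) (x : Md d), ((c • Bc) ^ n) x = c ^ n • (B ^ n) x := by
  intro n
  induction n with
  | zero => intro x; simp
  | succ n ih =>
    intro x
    have h1 : ((c • Bc) ^ (n+1)) x = ((c • Bc) ^ n) ((c • Bc) x) := by
      rw [pow_succ]; rfl
    have h2 : (B ^ (n+1)) x = (B ^ n) (B x) := by
      rw [pow_succ]; rfl
    rw [h1, h2, ContinuousLinearMap.smul_apply, hB, ContinuousLinearMap.map_smul, ih,
      smul_smul, pow_succ']

set_option synthInstance.maxHeartbeats 400000 in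
lemma expL_apply_of_pow_eq_zero (L : Md d →ₗ[ℂ] Md d) (μ : ℂ) (k : ℕ) (x : Md d)
    (hx : ((L - μ • 1) ^ k) x = 0) (t : ℝ) :
    expL L t x = Complex.exp (t * μ) •
      ∑ m ∈ Finset.range k, (((t : ℂ) ^ m / m.factorial)) • (((L - μ • 1) ^ m) x) := by
  classical
  letI : TopologicalSpace (Md d) := (Matrix.normedAddCommGroup (n := Fin d) (m := Fin d) (α := ℂ)).toUniformSpace.toTopologicalSpace
  set Ac : Md d →L[ℂ] Md d := LinearMap.toContinuousLinearMap L with hAc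
  set Bc : Md d →L[ℂ] Md d := Ac - μ • 1 with hBc
  have hB : ∀ z, Bc z = (L - μ • 1) z := by
    intro z; simp [hBc, hAc]
  have hsplit : (t : ℂ) • Ac = ((t : ℂ) * μ) • (1 : Md d →L[ℂ] Md d) + (t : ℂ) • Bc := by
    rw [hBc, smul_sub, smul_smul]
    abel
  have hcomm : Commute (((t : ℂ) * μ) • (1 : Md d →L[ℂ] Md d)) ((t : ℂ) • Bc) := by
    rw [← Algebra.algebraMap_eq_smul_one]
    exact Algebra.commutes _ _
  have hexp : NormedSpace.exp ((t : ℂ) • Ac) =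
      NormedSpace.exp (((t : ℂ) * μ) • (1 : Md d →L[ℂ] Md d)) *
        NormedSpace.exp ((t : ℂ) • Bc) := by
    letI : NormedAlgebra ℚ (Md d →L[ℂ] Md d) := NormedAlgebra.restrictScalars ℚ ℂ _
    rw [hsplit, NormedSpace.exp_add_of_commute hcomm]
  have hscal : NormedSpace.exp (((t : ℂ) * μ) • (1 : Md d →L[ℂ] Md d)) =
      Complex.exp ((t : ℂ) * μ) • (1 : Md d →L[ℂ] Md d) := by
    rw [← Algebra.algebraMap_eq_smul_one, ← NormedSpace.algebraMap_exp_comm,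
      Algebra.algebraMap_eq_smul_one, Complex.exp_eq_exp_ℂ]
  have happ : (NormedSpace.exp ((t : ℂ) • Bc)) x =
      ∑ m ∈ Finset.range k, (((t : ℂ) ^ m / m.factorial)) • (((L - μ • 1) ^ m) x) := by
    have hser : NormedSpace.exp ((t : ℂ) • Bc) =
        ∑' n : ℕ, ((n.factorial : ℂ)⁻¹) • ((t : ℂ) • Bc) ^ n := by
      rw [NormedSpace.exp_eq_tsum ℂ]
    rw [hser]
    have hsum : Summable fun n : ℕ => ((n.factorial : ℂ)⁻¹) • ((t : ℂ) • Bc) ^ n :=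
      NormedSpace.expSeries_summable' _
    have hts : (∑' n : ℕ, ((n.factorial : ℂ)⁻¹) • ((t : ℂ) • Bc) ^ n) x
        = ∑' n : ℕ, (((n.factorial : ℂ)⁻¹) • ((t : ℂ) • Bc) ^ n) x :=
      (ContinuousLinearMap.apply ℂ (Md d) x).map_tsum hsum
    rw [hts]
    have hterm : ∀ n : ℕ, (((n.factorial : ℂ)⁻¹) • ((t : ℂ) • Bc) ^ n) x
        = ((n.factorial : ℂ)⁻¹ * (t : ℂ) ^ n) • ((L - μ • 1) ^ n) x := by
      intro n
      simp only [ContinuousLinearMap.smul_apply]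
      rw [show (((t : ℂ) • Bc) ^ n) x = (t : ℂ) ^ n • ((L - μ • 1) ^ n) x from
        pow_smul_apply (t : ℂ) Bc hB n x, smul_smul]
    simp only [hterm]
    rw [tsum_eq_sum (s := Finset.range k)]
    · apply Finset.sum_congr rfl
      intro m hm
      rw [div_eq_mul_inv, mul_comm]
    · intro n hn
      have hnk : k ≤ n := by
        by_contra hcon
        exact hn (Finset.mem_range.mpr (by omega))
      have hz : ((L - μ • 1) ^ n) x = 0 := by
        have hsp : (L - μ • 1) ^ n = (L - μ • 1) ^ (n - k) * (L - μ • 1) ^ k := by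
          rw [← pow_add]; congr 1; omega
        rw [hsp, Module.End.mul_apply, hx, map_zero]
      rw [hz, smul_zero]
  calc expL L t x = (NormedSpace.exp ((t : ℂ) • Ac)) x := rfl
    _ = _ := by
      rw [hexp, ContinuousLinearMap.mul_apply, hscal, happ]
      simp only [ContinuousLinearMap.smul_apply, ContinuousLinearMap.one_apply]

end Helpers
section Contraction
variable {d : ℕ}

lemma expL_apply_eigen (L : Md d →ₗ[ℂ] Md d) (μ : ℂ) (x : Md d)
    (hx : L x = μ • x) (t : ℝ) : expL L t x = Complex.exp (t * μ) • x := by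
  have h1 : (((L - μ • 1) : Md d →ₗ[ℂ] Md d) ^ 1) x = 0 := by
    rw [pow_one, LinearMap.sub_apply, hx]
    simp
  have := expL_apply_of_pow_eq_zero L μ 1 x h1 t
  simpa using this

lemma stack_mul {n : ℕ} (f g : Fin n → Md d) (F G : Matrix (Fin n × Fin d) (Fin d) ℂ)
    (hF : ∀ p k, F p k = f p.1 p.2 k) (hG : ∀ p k, G p k = g p.1 p.2 k) :
    Fᴴ * G = ∑ j, (f j)ᴴ * (g j) := by
  ext a b
  simp [Matrix.mul_apply, Matrix.conjTranspose_apply, Matrix.sum_apply, hF, hG,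
    Fintype.sum_prod_type]

lemma trace_ct_mul_self {m k : Type*} [Fintype m] [Fintype k] (M : Matrix m k ℂ) :
    (Mᴴ * M).trace = ((∑ i, ∑ j, Complex.normSq (M i j) : ℝ) : ℂ) := by
  have hz : ∀ z : ℂ, star z * z = (Complex.normSq z : ℂ) := fun z => by
    rw [Complex.star_def, mul_comm, Complex.mul_conj]
  simp only [Matrix.trace, Matrix.diag, Matrix.mul_apply, Matrix.conjTranspose_apply, hz]
  push_cast
  rw [Finset.sum_comm]

lemma q_nonneg {m k : Type*} [Fintype m] [Fintype k] (M : Matrix m k ℂ) :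
    (0:ℝ) ≤ ∑ i, ∑ j, Complex.normSq (M i j) :=
  Finset.sum_nonneg fun _ _ => Finset.sum_nonneg fun _ _ => Complex.normSq_nonneg _

lemma channel_q_contract {Φ : Md d →ₗ[ℂ] Md d} (hΦ : IsUnitalChannel Φ) (X : Md d) :
    ∑ i, ∑ j, Complex.normSq (Φ X i j) ≤ ∑ i, ∑ j, Complex.normSq (X i j) := by
  obtain ⟨⟨n, V, hV⟩, hu, htr⟩ := hΦ
  have hVV : ∑ j, (V j)ᴴ * (V j) = (1 : Md d) := by
    have h1 := hV 1
    rw [hu] at h1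
    simpa [Matrix.mul_one] using h1.symm
  set V' : Matrix (Fin n × Fin d) (Fin d) ℂ := Matrix.of fun p k => V p.1 p.2 k with hV'
  set W : Matrix (Fin n × Fin d) (Fin d) ℂ :=
    Matrix.of fun p k => (X * V p.1) p.2 k with hW
  have hV'V' : V'ᴴ * V' = 1 := by
    rw [stack_mul V V V' V' (fun p k => rfl) (fun p k => rfl)]
    exact hVV
  have hVW : V'ᴴ * W = Φ X := by
    rw [stack_mul V (fun j => X * V j) V' W (fun p k => rfl) (fun p k => rfl), hV X]
    exact Finset.sum_congr rfl fun j _ => (Matrix.mul_assoc _ _ _).symm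
  have hWW : Wᴴ * W = Φ (Xᴴ * X) := by
    rw [stack_mul (fun j => X * V j) (fun j => X * V j) W W
      (fun p k => rfl) (fun p k => rfl), hV (Xᴴ * X)]
    refine Finset.sum_congr rfl fun j _ => ?_
    rw [Matrix.conjTranspose_mul]
    simp [Matrix.mul_assoc]
  set P : Matrix (Fin n × Fin d) (Fin n × Fin d) ℂ := V' * V'ᴴ with hP
  have hPh : Pᴴ = P := by simp [hP, Matrix.conjTranspose_mul]
  have hPP : P * P = P := by
    rw [hP, Matrix.mul_assoc, ← Matrix.mul_assoc V'ᴴ, hV'V', Matrix.one_mul]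
  have hWPW : Wᴴ * (P * W) = (Φ X)ᴴ * (Φ X) := by
    rw [← hVW, Matrix.conjTranspose_mul, Matrix.conjTranspose_conjTranspose, hP]
    rw [Matrix.mul_assoc, Matrix.mul_assoc]
  set K : Matrix (Fin n × Fin d) (Fin d) ℂ := W - P * W with hK
  have hKK : Kᴴ * K = Wᴴ * W - (Φ X)ᴴ * (Φ X) := by
    rw [hK, Matrix.conjTranspose_sub, Matrix.conjTranspose_mul, hPh,
      Matrix.sub_mul, Matrix.mul_sub, Matrix.mul_sub]
    rw [Matrix.mul_assoc Wᴴ P (P * W), ← Matrix.mul_assoc P P W, hPP]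
    rw [← Matrix.mul_assoc Wᴴ P W, Matrix.mul_assoc Wᴴ P W, hWPW]
    abel
  have htrW : (Wᴴ * W).trace = (Xᴴ * X).trace := by rw [hWW]; exact htr _
  have hmain : ((Φ X)ᴴ * (Φ X)).trace = (Xᴴ * X).trace - (Kᴴ * K).trace := by
    rw [hKK, Matrix.trace_sub, htrW]
    ring
  rw [trace_ct_mul_self, trace_ct_mul_self, trace_ct_mul_self, ← Complex.ofReal_sub] at hmain
  have hre := Complex.ofReal_injective hmain
  have hKpos := q_nonneg K
  rw [hre]
  linarith

lemma norm_sq_eq_normSq (z : ℂ) : ‖z‖ ^ 2 = Complex.normSq z := by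
  rw [Complex.sq_norm]

lemma expL_norm_bound (L : Md d →ₗ[ℂ] Md d)
    (h : ∀ t : ℝ, 0 ≤ t → IsUnitalChannel (expL L t)) :
    ∀ t : ℝ, 0 ≤ t → ∀ X : Md d, ‖expL L t X‖ ≤ d * ‖X‖ := by
  intro t ht X
  have hq := channel_q_contract (h t ht) X
  have hqX : ∑ i, ∑ j, Complex.normSq (X i j) ≤ (d * ‖X‖) ^ 2 := by
    have hb : ∀ i j, Complex.normSq (X i j) ≤ ‖X‖ ^ 2 := by
      intro i j
      rw [← norm_sq_eq_normSq]
      exact pow_le_pow_left₀ (norm_nonneg _) (Matrix.norm_entry_le_entrywise_sup_norm X) 2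
    calc ∑ i, ∑ j, Complex.normSq (X i j) ≤ ∑ _i : Fin d, ∑ _j : Fin d, ‖X‖ ^ 2 :=
          Finset.sum_le_sum fun i _ => Finset.sum_le_sum fun j _ => hb i j
      _ = (d : ℝ) * ((d : ℝ) * ‖X‖ ^ 2) := by simp [mul_assoc]
      _ ≤ (d * ‖X‖) ^ 2 := by
          rw [mul_pow]
          nlinarith [norm_nonneg X, Nat.cast_nonneg (α := ℝ) d]
  have hentry : ∀ i j, ‖expL L t X i j‖ ≤ d * ‖X‖ := by
    intro i j
    have h2 : Complex.normSq (expL L t X i j) ≤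
        ∑ i', ∑ j', Complex.normSq (expL L t X i' j') := by
      have hinner : Complex.normSq (expL L t X i j) ≤
          ∑ j', Complex.normSq (expL L t X i j') :=
        Finset.single_le_sum (fun _ _ => Complex.normSq_nonneg _) (Finset.mem_univ j)
      have houter : (∑ j', Complex.normSq (expL L t X i j')) ≤
          ∑ i', ∑ j', Complex.normSq (expL L t X i' j') :=
        Finset.single_le_sum (f := fun i' => ∑ j', Complex.normSq (expL L t X i' j'))
          (fun _ _ => Finset.sum_nonneg fun _ _ => Complex.normSq_nonneg _)
          (Finset.mem_univ i)
      linarith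
    have h1 : ‖expL L t X i j‖ ^ 2 ≤ (d * ‖X‖) ^ 2 := by
      rw [norm_sq_eq_normSq]
      linarith
    have hdX : (0:ℝ) ≤ d * ‖X‖ := by positivity
    nlinarith [norm_nonneg (expL L t X i j)]
  exact (Matrix.norm_le_iff (by positivity)).mpr hentry

end Contraction
section Spectral
variable {d : ℕ}

def Pspace (L : Md d →ₗ[ℂ] Md d) : Submodule ℂ (Md d) :=
  ⨆ a : ℝ, Module.End.eigenspace L ((a : ℂ) * Complex.I)

def Nspace (L : Md d →ₗ[ℂ] Md d) : Submodule ℂ (Md d) :=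
  ⨆ μ : ℂ, ⨆ _ : μ.re < 0, Module.End.maxGenEigenspace L μ

lemma periphGen_eq (L : Md d →ₗ[ℂ] Md d) : periphGen L = Pspace L := by
  unfold periphGen Pspace
  have hset : {X : Md d | ∃ a : ℝ, L X = ((a : ℂ) * Complex.I) • X} =
      ⋃ a : ℝ, (Module.End.eigenspace L ((a : ℂ) * Complex.I) : Set (Md d)) := by
    ext X
    simp only [Set.mem_setOf_eq, Set.mem_iUnion, SetLike.mem_coe,
      Module.End.mem_eigenspace_iff]
  rw [hset, Submodule.span_iUnion]
  exact iSup_congr fun a => Submodule.span_eq _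

lemma exp_norm_real_mul (t : ℝ) (μ : ℂ) : ‖Complex.exp ((t : ℂ) * μ)‖ = Real.exp (t * μ.re) := by
  rw [Complex.norm_exp]
  congr 1
  simp [Complex.mul_re]

lemma eigenvalue_re_nonpos (L : Md d →ₗ[ℂ] Md d)
    (hb : ∀ t : ℝ, 0 ≤ t → ∀ X : Md d, ‖expL L t X‖ ≤ d * ‖X‖)
    (μ : ℂ) (x : Md d) (hx : L x = μ • x) (hx0 : x ≠ 0) : μ.re ≤ 0 := by
  by_contra hpos
  push_neg at hpos
  set t : ℝ := Real.log (d + 1) / μ.re with ht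
  have hlog : 0 ≤ Real.log (d + 1) := Real.log_nonneg (by nlinarith [Nat.cast_nonneg (α := ℝ) d])
  have ht0 : 0 ≤ t := div_nonneg hlog hpos.le
  have hbt := hb t ht0 x
  rw [expL_apply_eigen L μ x hx t, norm_smul, exp_norm_real_mul] at hbt
  have htμ : t * μ.re = Real.log (d + 1) := by
    rw [ht]; field_simp
  rw [htμ, Real.exp_log (by positivity)] at hbt
  have hxn : 0 < ‖x‖ := norm_pos_iff.mpr hx0
  nlinarith

lemma ker_sq_le_ker (L : Md d →ₗ[ℂ] Md d)
    (hb : ∀ t : ℝ, 0 ≤ t → ∀ X : Md d, ‖expL L t X‖ ≤ d * ‖X‖)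
    (μ : ℂ) (hμ : μ.re = 0) (x : Md d)
    (hx2 : (((L - μ • 1) : Md d →ₗ[ℂ] Md d) ^ 2) x = 0) : (L - μ • 1) x = 0 := by
  by_contra hBx
  set B : Md d →ₗ[ℂ] Md d := L - μ • 1 with hB
  have hy : 0 < ‖B x‖ := norm_pos_iff.mpr hBx
  have key : ∀ s : ℝ, 0 ≤ s → s * ‖B x‖ - ‖x‖ ≤ d * ‖x‖ := by
    intro s hs
    have hf := expL_apply_of_pow_eq_zero L μ 2 x hx2 s
    have hsum : ∑ m ∈ Finset.range 2, (((s : ℂ) ^ m / m.factorial)) • ((B ^ m) x)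
        = x + (s : ℂ) • (B x) := by
      rw [Finset.sum_range_succ, Finset.sum_range_one]
      simp
    rw [hsum] at hf
    have hbt := hb s hs x
    rw [hf, norm_smul, exp_norm_real_mul, hμ, mul_zero, Real.exp_zero, one_mul] at hbt
    have htri : ‖(s : ℂ) • (B x)‖ - ‖x‖ ≤ ‖x + (s : ℂ) • (B x)‖ := by
      have h' : ‖(s : ℂ) • (B x)‖ ≤ ‖x + (s : ℂ) • (B x)‖ + ‖x‖ := by
        calc ‖(s : ℂ) • B x‖ = ‖(x + (s : ℂ) • B x) - x‖ := by rw [add_sub_cancel_left]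
          _ ≤ ‖x + (s : ℂ) • B x‖ + ‖x‖ := norm_sub_le _ _
      linarith
    have hsmul : ‖(s : ℂ) • (B x)‖ = s * ‖B x‖ := by
      rw [norm_smul, Complex.norm_real, Real.norm_of_nonneg hs]
    linarith
  have := key ((d * ‖x‖ + ‖x‖ + 1) / ‖B x‖) (by positivity)
  rw [div_mul_cancel₀ _ (ne_of_gt hy)] at this
  linarith

end Spectral
section Spectral2
variable {d : ℕ}

lemma maxGen_imag_le_eigen (L : Md d →ₗ[ℂ] Md d)
    (hb : ∀ t : ℝ, 0 ≤ t → ∀ X : Md d, ‖expL L t X‖ ≤ d * ‖X‖)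
    (μ : ℂ) (hμ : μ.re = 0) :
    Module.End.maxGenEigenspace L μ ≤ Module.End.eigenspace L μ := by
  intro x hx
  rw [Module.End.mem_maxGenEigenspace] at hx
  obtain ⟨k, hk⟩ := hx
  set B : Md d →ₗ[ℂ] Md d := L - μ • 1 with hB
  have claim : ∀ (k : ℕ) (x : Md d), (B ^ k) x = 0 → B x = 0 := by
    intro k
    induction k with
    | zero =>
      intro x hx
      simp only [pow_zero, Module.End.one_apply] at hx
      rw [hx, map_zero]
    | succ k ih =>
      intro x hx
      have h1 : (B ^ k) (B x) = 0 := by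
        rw [← Module.End.mul_apply, ← pow_succ]
        exact hx
      have h2 := ih (B x) h1
      have h3 : (B ^ 2) x = 0 := by
        rw [pow_two, Module.End.mul_apply]
        exact h2
      exact ker_sq_le_ker L hb μ hμ x h3
  have hBx := claim k x hk
  rw [Module.End.mem_eigenspace_iff]
  have : L x - μ • x = 0 := by
    simpa [hB, LinearMap.sub_apply] using hBx
  exact sub_eq_zero.mp this

lemma maxGen_pos_eq_bot (L : Md d →ₗ[ℂ] Md d)
    (hb : ∀ t : ℝ, 0 ≤ t → ∀ X : Md d, ‖expL L t X‖ ≤ d * ‖X‖)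
    (μ : ℂ) (hμ : 0 < μ.re) : Module.End.maxGenEigenspace L μ = ⊥ := by
  rw [eq_bot_iff]
  intro x hx
  rw [Submodule.mem_bot]
  by_contra hx0
  rw [Module.End.mem_maxGenEigenspace] at hx
  obtain ⟨k, hk⟩ := hx
  set B : Md d →ₗ[ℂ] Md d := L - μ • 1 with hB
  have claim : ∀ (k : ℕ) (x : Md d), x ≠ 0 → (B ^ k) x = 0 → ∃ y : Md d, y ≠ 0 ∧ B y = 0 := by
    intro k
    induction k with
    | zero =>
      intro x hx0 hx
      simp only [pow_zero, Module.End.one_apply] at hx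
      exact absurd hx hx0
    | succ k ih =>
      intro x hx0 hx
      by_cases h : (B ^ k) x = 0
      · exact ih x hx0 h
      · refine ⟨(B ^ k) x, h, ?_⟩
        rw [← Module.End.mul_apply, ← pow_succ']
        exact hx
  obtain ⟨y, hy0, hBy⟩ := claim k x hx0 hk
  have heig : L y = μ • y := by
    have : L y - μ • y = 0 := by simpa [hB, LinearMap.sub_apply] using hBy
    have h2 : L y - μ • y + μ • y = 0 + μ • y := by rw [this]
    simpa using h2
  exact absurd (eigenvalue_re_nonpos L hb μ y heig hy0) (by linarith)

lemma PN_sup_top (L : Md d →ₗ[ℂ] Md d)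
    (hb : ∀ t : ℝ, 0 ≤ t → ∀ X : Md d, ‖expL L t X‖ ≤ d * ‖X‖) :
    Pspace L ⊔ Nspace L = ⊤ := by
  rw [eq_top_iff, ← Module.End.iSup_maxGenEigenspace_eq_top (f := (L : Module.End ℂ (Md d)))]
  apply iSup_le
  intro μ
  rcases lt_trichotomy μ.re 0 with hneg | hzero | hpos
  · refine le_sup_of_le_right ?_
    exact le_iSup_of_le μ (le_iSup (fun _ : μ.re < 0 => Module.End.maxGenEigenspace L μ) hneg)
  · refine le_sup_of_le_left ?_
    have hμeq : μ = ((μ.im : ℂ)) * Complex.I := by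
      apply Complex.ext <;> simp [hzero]
    have h1 : Module.End.maxGenEigenspace L μ ≤ Module.End.eigenspace L μ :=
      maxGen_imag_le_eigen L hb μ hzero
    refine h1.trans ?_
    rw [hμeq]
    exact le_iSup (fun a : ℝ => Module.End.eigenspace L ((a : ℂ) * Complex.I)) μ.im
  · rw [maxGen_pos_eq_bot L hb μ hpos]
    exact bot_le

end Spectral2
section Decay
variable {d : ℕ}

/-- The decay set is a submodule. -/
def decaySub (L : Md d →ₗ[ℂ] Md d) : Submodule ℂ (Md d) where
  carrier := decaySet L
  add_mem' := by
    intro a b ha hb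
    show Filter.Tendsto (fun t : ℝ => expL L t (a + b)) atTop (nhds 0)
    have := ha.add hb
    simpa [map_add] using this
  zero_mem' := by
    simp only [decaySet, Set.mem_setOf_eq, map_zero]
    exact tendsto_const_nhds
  smul_mem' := by
    intro c x hx
    show Filter.Tendsto (fun t : ℝ => expL L t (c • x)) atTop (nhds 0)
    have := hx.const_smul c
    simpa [_root_.map_smul] using this

lemma tendsto_coeff_zero (μ : ℂ) (hμ : μ.re < 0) (m : ℕ) :
    Filter.Tendsto (fun t : ℝ => Complex.exp ((t : ℂ) * μ) * ((t : ℂ) ^ m / m.factorial))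
      atTop (nhds 0) := by
  rw [tendsto_zero_iff_norm_tendsto_zero]
  have hg : Filter.Tendsto (fun t : ℝ =>
      (((-μ.re) ^ m)⁻¹ * (m.factorial : ℝ)⁻¹) * (((-μ.re) * t) ^ m * Real.exp (-((-μ.re) * t))))
      atTop (nhds 0) := by
    have h1 := Real.tendsto_pow_mul_exp_neg_atTop_nhds_zero m
    have h2 : Filter.Tendsto (fun t : ℝ => (-μ.re) * t) atTop atTop :=
      Filter.Tendsto.const_mul_atTop (by linarith) Filter.tendsto_id
    have h3 := (h1.comp h2).const_mul (((-μ.re) ^ m)⁻¹ * (m.factorial : ℝ)⁻¹)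
    simpa [Function.comp, mul_zero] using h3
  apply hg.congr'
  filter_upwards [Filter.eventually_ge_atTop (0:ℝ)] with t ht
  have hfac : (0:ℝ) < (m.factorial : ℝ) := by exact_mod_cast Nat.factorial_pos m
  have hre : (0:ℝ) < -μ.re := by linarith
  rw [norm_mul, exp_norm_real_mul, norm_div]
  have h4 : ‖(t : ℂ) ^ m‖ = t ^ m := by
    rw [norm_pow, Complex.norm_real, Real.norm_of_nonneg ht]
  have h5 : ‖((m.factorial : ℕ) : ℂ)‖ = (m.factorial : ℝ) := by
    rw [Complex.norm_natCast]
  rw [h4, h5]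
  rw [mul_pow]
  have hexp : -(-μ.re * t) = t * μ.re := by ring
  rw [hexp]
  field_simp

lemma Nspace_le_decay (L : Md d →ₗ[ℂ] Md d) : Nspace L ≤ decaySub L := by
  apply iSup_le
  intro μ
  apply iSup_le
  intro hμ
  intro y hy
  rw [Module.End.mem_maxGenEigenspace] at hy
  obtain ⟨k, hk⟩ := hy
  show Filter.Tendsto (fun t : ℝ => expL L t y) atTop (nhds 0)
  have hfun : ∀ t : ℝ, expL L t y =
      ∑ m ∈ Finset.range k, (Complex.exp ((t : ℂ) * μ) * ((t : ℂ) ^ m / m.factorial)) •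
        (((L - μ • 1 : Md d →ₗ[ℂ] Md d) ^ m) y) := by
    intro t
    rw [expL_apply_of_pow_eq_zero L μ k y hk t, Finset.smul_sum]
    exact Finset.sum_congr rfl fun m _ => smul_smul _ _ _
  rw [show (fun t : ℝ => expL L t y) = fun t : ℝ =>
      ∑ m ∈ Finset.range k, (Complex.exp ((t : ℂ) * μ) * ((t : ℂ) ^ m / m.factorial)) •
        (((L - μ • 1 : Md d →ₗ[ℂ] Md d) ^ m) y) from funext hfun]
  have hsum0 : (0 : Md d) = ∑ m ∈ Finset.range k, (0 : Md d) := by simp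
  rw [hsum0]
  apply tendsto_finset_sum
  intro m hm
  have hc := tendsto_coeff_zero μ hμ m
  have := hc.smul_const (((L - μ • 1 : Md d →ₗ[ℂ] Md d) ^ m) y)
  simpa using this

end Decay

section Coord
variable {d : ℕ}

lemma Pspace_decay_eq_zero (L : Md d →ₗ[ℂ] Md d) (x : Md d)
    (hxP : x ∈ periphGen L)
    (hx : Filter.Tendsto (fun t : ℝ => expL L t x) atTop (nhds 0)) : x = 0 := by
  classical
  set S : Set (Md d) := {X : Md d | ∃ a : ℝ, L X = ((a : ℂ) * Complex.I) • X} with hS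
  obtain ⟨b, hbS, hspan, hli⟩ := exists_linearIndependent ℂ S
  replace hli : LinearIndepOn ℂ id b := hli
  have hxb : x ∈ Submodule.span ℂ b := by rw [hspan]; exact hxP
  obtain ⟨c, hsupp, hsum⟩ := Submodule.mem_span_set.mp hxb
  have key : ∀ v ∈ c.support, ∃ g : ℝ → ℂ,
      (∀ t, expL L t v = g t • v) ∧ (∀ t, ‖g t‖ = 1) := by
    intro v hv
    obtain ⟨a, ha⟩ := hbS (hsupp hv)
    refine ⟨fun t => Complex.exp ((t : ℂ) * ((a : ℂ) * Complex.I)),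
      fun t => expL_apply_eigen L _ v ha t, fun t => ?_⟩
    rw [exp_norm_real_mul]
    simp
  choose! g hg hgnorm using key
  suffices hc : ∀ v ∈ c.support, c v = 0 by
    have hczero : c = 0 := Finsupp.ext fun v => by
      by_cases hv : v ∈ c.support
      · exact hc v hv
      · exact Finsupp.notMem_support_iff.mp hv
    rw [← hsum, hczero]
    simp
  intro v₀ hv₀
  have hv₀mem : v₀ ∈ hli.extend (Set.subset_univ b) :=
    hli.subset_extend _ (hsupp hv₀)
  set BB := Module.Basis.extend hli with hBB
  set ℓ : Md d →ₗ[ℂ] ℂ := BB.coord ⟨v₀, hv₀mem⟩ with hℓ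
  have hℓself : ∀ (w : Md d) (hw : w ∈ hli.extend (Set.subset_univ b)),
      ℓ w = if w = v₀ then 1 else 0 := by
    intro w hw
    have hBw : BB ⟨w, hw⟩ = w := Module.Basis.extend_apply_self hli ⟨w, hw⟩
    have h1 : ℓ w = BB.repr w ⟨v₀, hv₀mem⟩ := rfl
    rw [h1]
    conv_lhs => rw [← hBw]
    rw [Module.Basis.repr_self, Finsupp.single_apply]
    by_cases he : w = v₀
    · have hsub : (⟨w, hw⟩ : hli.extend (Set.subset_univ b)) = ⟨v₀, hv₀mem⟩ :=
        Subtype.ext he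
      simp [hsub, he]
    · have hsub : (⟨w, hw⟩ : hli.extend (Set.subset_univ b)) ≠ ⟨v₀, hv₀mem⟩ := by
        intro hcon
        exact he (congrArg Subtype.val hcon)
      simp [hsub, he]
  have hexpx : ∀ t : ℝ, ℓ (expL L t x) = c v₀ * g v₀ t := by
    intro t
    have hx' : expL L t x = ∑ v ∈ c.support, c v • (g v t • v) := by
      conv_lhs => rw [← hsum]
      rw [Finsupp.sum, map_sum]
      exact Finset.sum_congr rfl fun v hv => by
        rw [LinearMap.map_smul, hg v hv t]
    rw [hx', map_sum, Finset.sum_eq_single v₀]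
    · rw [LinearMap.map_smul, LinearMap.map_smul,
        hℓself v₀ (hli.subset_extend _ (hsupp hv₀))]
      simp [smul_eq_mul]
    · intro v hv hne
      rw [LinearMap.map_smul, LinearMap.map_smul,
        hℓself v (hli.subset_extend _ (hsupp hv))]
      simp [hne]
    · intro hcon
      exact absurd hv₀ hcon
  have hcont : Continuous ℓ := LinearMap.continuous_of_finiteDimensional ℓ
  have h0 : Filter.Tendsto (fun t : ℝ => ℓ (expL L t x)) atTop (nhds (ℓ 0)) :=
    (hcont.tendsto 0).comp hx
  rw [map_zero] at h0
  have h1 : Filter.Tendsto (fun t : ℝ => ‖ℓ (expL L t x)‖) atTop (nhds 0) := by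
    simpa using h0.norm
  have hnorm : (fun t : ℝ => ‖ℓ (expL L t x)‖) = fun _ => ‖c v₀‖ := by
    funext t
    rw [hexpx t, norm_mul, hgnorm v₀ hv₀ t, mul_one]
  rw [hnorm] at h1
  have := tendsto_nhds_unique h1 tendsto_const_nhds
  exact norm_eq_zero.mp this.symm

end Coord


/-- `M_d = P ⊕ N`: every matrix decomposes uniquely as a sum of an
element of `P` and an element of `N`. -/
theorem stmt_8 (d : ℕ) (L : Md d →ₗ[ℂ] Md d)
    (h : ∀ t : ℝ, 0 ≤ t → IsUnitalChannel (expL L t)) :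
    ∀ Z : Md d, ∃! p : Md d × Md d,
      p.1 ∈ periphGen L ∧ p.2 ∈ decaySet L ∧ Z = p.1 + p.2 := by
  intro Z
  have hb := expL_norm_bound L h
  have htop := PN_sup_top L hb
  have hZ : Z ∈ Pspace L ⊔ Nspace L := by rw [htop]; exact Submodule.mem_top
  obtain ⟨p, hp, n, hn, hpn⟩ := Submodule.mem_sup.mp hZ
  have hnD : n ∈ decaySub L := Nspace_le_decay L hn
  refine ⟨(p, n), ⟨?_, ?_, ?_⟩, ?_⟩
  · rw [periphGen_eq]; exact hp
  · exact hnD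
  · exact hpn.symm
  · rintro ⟨p', n'⟩ ⟨hp', hn', hz⟩
    have hadd : p' + n' = p + n := hz.symm.trans hpn.symm
    have hmem : p' - p ∈ periphGen L := by
      refine sub_mem hp' ?_
      rw [periphGen_eq]
      exact hp
    have hn'D : n' ∈ decaySub L := hn'
    have hdiffD : n - n' ∈ decaySub L := sub_mem hnD hn'D
    have hdiffeq : p' - p = n - n' := by
      have h2 : p' + n' = n + p := by rw [hadd, add_comm]
      exact sub_eq_sub_iff_add_eq_add.mpr h2
    have hdecay : Filter.Tendsto (fun t : ℝ => expL L t (p' - p)) atTop (nhds 0) := by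
      rw [hdiffeq]
      exact hdiffD
    have hzero := Pspace_decay_eq_zero L _ hmem hdecay
    have hpeq : p' = p := sub_eq_zero.mp hzero
    have hneq : n' = n := by
      have := hadd
      rw [hpeq] at this
      exact add_left_cancel this
    exact Prod.ext hpeq hneq
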